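/- Let α ∈ ℂ be such that 2α is not a nonpositive integer. For every real t < 0, the function u(t) := (1−t)^{−α}·F(α+1, α−1; 2α; 1/(1−t)) satisfies t(1−t)·u''(t) + (1−2t)·u'(t) + α(α−1)·u(t) = u(t)/(1−t). -/

import Mathlib

/-- The Gauss hypergeometric function F(a,b;c;x), defined for real x with |x| < 1 by its
power series, with Pochhammer symbols (a)_k = a(a+1)⋯(a+k−1). -/
noncomputable def hypF (a b c : ℂ) (x : ℝ) : ℂ :=
  ∑' k : ℕ, ((ascPochhammer ℂ k).eval a * (ascPochhammer ℂ k).eval b /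
    ((ascPochhammer ℂ k).eval c * (Nat.factorial k : ℂ))) * (x : ℂ) ^ k

open Complex

noncomputable def hcoef (α : ℂ) (k : ℕ) : ℂ :=
  (ascPochhammer ℂ k).eval (α + 1) * (ascPochhammer ℂ k).eval (α - 1) /
    ((ascPochhammer ℂ k).eval (2 * α) * (Nat.factorial k : ℂ))

lemma poch_ne (α : ℂ) (hα : ∀ m : ℕ, 2 * α ≠ -(m : ℂ)) (k : ℕ) :
    (ascPochhammer ℂ k).eval (2 * α) ≠ 0 := by
  induction k with
  | zero => simp
  | succ n ih =>
      rw [ascPochhammer_succ_right]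
      simp only [Polynomial.eval_mul, Polynomial.eval_add, Polynomial.eval_X,
        Polynomial.eval_natCast]
      refine mul_ne_zero ih ?_
      intro h
      exact hα n (by linear_combination h)

lemma hcoef_rec (α : ℂ) (hα : ∀ m : ℕ, 2 * α ≠ -(m : ℂ)) (k : ℕ) :
    hcoef α (k + 1) * (((k : ℂ) + 1) * (2 * α + k)) =
      hcoef α k * ((α + k + 1) * (α + k - 1)) := by
  have h1 := poch_ne α hα k
  have h2 : (2 * α + (k : ℂ)) ≠ 0 := by
    intro h; exact hα k (by linear_combination h)
  have h3 : ((Nat.factorial k : ℂ)) ≠ 0 := Nat.cast_ne_zero.2 (Nat.factorial_ne_zero k)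
  have h4 : ((k : ℂ) + 1) ≠ 0 := Nat.cast_add_one_ne_zero k
  unfold hcoef
  rw [ascPochhammer_succ_right, Nat.factorial_succ]
  simp only [Polynomial.eval_mul, Polynomial.eval_add, Polynomial.eval_X,
    Polynomial.eval_natCast, Nat.cast_mul, Nat.cast_add, Nat.cast_one]
  rw [mul_comm 2 α] at h1 h2 ⊢
  field_simp
  ring

lemma bern_aux (m : ℕ) {x : ℝ} (hx : 1 ≤ x) : x ^ m * (x + m) ≤ (x + 1) ^ m * x := by
  have hx0 : 0 < x := lt_of_lt_of_le one_pos hx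
  have h1 : 1 + (m : ℝ) * (1 / x) ≤ (1 + 1 / x) ^ m := by
    apply one_add_mul_le_pow
    have : 0 ≤ 1 / x := by positivity
    linarith
  have h2 : x ^ m * (x + m) = x ^ (m + 1) * (1 + m * (1 / x)) := by
    field_simp; ring
  have h3 : x ^ (m + 1) * (1 + 1 / x) ^ m = (x + 1) ^ m * x := by
    rw [pow_succ]
    rw [mul_comm (x ^ m) x, mul_assoc, ← mul_pow]
    have : x * (1 + 1 / x) = x + 1 := by field_simp
    rw [this, mul_comm]
  calc x ^ m * (x + m) = x ^ (m + 1) * (1 + m * (1 / x)) := h2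
    _ ≤ x ^ (m + 1) * (1 + 1 / x) ^ m := by
        apply mul_le_mul_of_nonneg_left h1 (by positivity)
    _ = (x + 1) ^ m * x := h3

set_option maxHeartbeats 1000000 in
lemma hcoef_growth (α : ℂ) (hα : ∀ m : ℕ, 2 * α ≠ -(m : ℂ)) :
    ∃ C : ℝ, 0 ≤ C ∧ ∃ m : ℕ, ∀ k : ℕ, ‖hcoef α k‖ ≤ C * ((k : ℝ) + 1) ^ m := by
  set a : ℝ := ‖α‖ with ha
  have ha0 : 0 ≤ a := norm_nonneg _
  obtain ⟨m, hm8⟩ : ∃ m : ℕ, 8 * a + 8 ≤ (m : ℝ) := by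
    refine ⟨⌈8 * a⌉₊ + 8, ?_⟩
    have := Nat.le_ceil (8 * a)
    push_cast
    linarith
  obtain ⟨K, hKge⟩ : ∃ K : ℕ, 2 * a * ((m : ℝ) + 1) + (a + 1) ^ 2 ≤ (K : ℝ) := by
    refine ⟨⌈2 * a * ((m : ℝ) + 1) + (a + 1) ^ 2⌉₊ + 1, ?_⟩
    have := Nat.le_ceil (2 * a * ((m : ℝ) + 1) + (a + 1) ^ 2)
    push_cast
    linarith
  -- step inequality
  have step : ∀ k : ℕ, K ≤ k → ‖hcoef α (k + 1)‖ * ((k : ℝ) + 1) ≤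
      ‖hcoef α k‖ * ((k : ℝ) + 1 + m) := by
    intro k hk
    have hkK : (K : ℝ) ≤ (k : ℝ) := by exact_mod_cast hk
    have hka : 2 * a + 1 ≤ (k : ℝ) := by nlinarith
    have h2 : (2 * α + (k : ℂ)) ≠ 0 := by
      intro h; exact hα k (by linear_combination h)
    have h2n : 0 < ‖2 * α + (k : ℂ)‖ := norm_pos_iff.2 h2
    have hlow : (k : ℝ) - 2 * a ≤ ‖2 * α + (k : ℂ)‖ := by
      have := norm_sub_norm_le ((k : ℂ)) (-(2 * α))
      simp only [norm_neg, sub_neg_eq_add] at this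
      have hnk : ‖(k : ℂ)‖ = (k : ℝ) := by
        simp
      have hn2 : ‖2 * α‖ = 2 * a := by
        rw [norm_mul]; simp [ha]
      rw [hnk, hn2] at this
      calc (k : ℝ) - 2 * a ≤ ‖(k : ℂ) + 2 * α‖ := this
        _ = ‖2 * α + (k : ℂ)‖ := by rw [add_comm]
    have hnk1 : ‖((k : ℂ) + 1)‖ = (k : ℝ) + 1 := by
      rw [show ((k : ℂ) + 1) = ((k + 1 : ℕ) : ℂ) by push_cast; ring]
      rw [Complex.norm_natCast]; push_cast; ring
    have normeq : ‖hcoef α (k + 1)‖ * (((k : ℝ) + 1) * ‖2 * α + (k : ℂ)‖) =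
        ‖hcoef α k‖ * (‖α + k + 1‖ * ‖α + k - 1‖) := by
      have h := congrArg norm (hcoef_rec α hα k)
      rw [norm_mul, norm_mul, norm_mul, norm_mul, hnk1] at h
      exact h
    have bd1 : ‖α + (k : ℂ) + 1‖ * ‖α + (k : ℂ) - 1‖ ≤ ((k : ℝ) + a + 1) ^ 2 := by
      have e1 : ‖α + (k : ℂ) + 1‖ ≤ (k : ℝ) + a + 1 := by
        calc ‖α + (k : ℂ) + 1‖ ≤ ‖α + (k : ℂ)‖ + ‖(1 : ℂ)‖ := norm_add_le _ _
          _ ≤ (a + k) + 1 := by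
              have := norm_add_le α ((k : ℂ))
              simp only [Complex.norm_natCast, norm_one] at this ⊢
              linarith [this]
          _ = (k : ℝ) + a + 1 := by ring
      have e2 : ‖α + (k : ℂ) - 1‖ ≤ (k : ℝ) + a + 1 := by
        calc ‖α + (k : ℂ) - 1‖ ≤ ‖α + (k : ℂ)‖ + ‖(1 : ℂ)‖ := norm_sub_le _ _
          _ ≤ (a + k) + 1 := by
              have := norm_add_le α ((k : ℂ))
              simp only [Complex.norm_natCast, norm_one] at this ⊢
              linarith [this]
          _ = (k : ℝ) + a + 1 := by ring
      have h01 : 0 ≤ ‖α + (k : ℂ) - 1‖ := norm_nonneg _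
      nlinarith [norm_nonneg (α + (k : ℂ) + 1)]
    have bd2 : ((k : ℝ) + a + 1) ^ 2 ≤ ((k : ℝ) - 2 * a) * ((k : ℝ) + 1 + m) := by
      nlinarith
    have key : ‖hcoef α (k + 1)‖ * (((k : ℝ) + 1) * ‖2 * α + (k : ℂ)‖) ≤
        ‖hcoef α k‖ * (((k : ℝ) + 1 + m) * ‖2 * α + (k : ℂ)‖) := by
      rw [normeq]
      have hc0 : 0 ≤ ‖hcoef α k‖ := norm_nonneg _
      calc ‖hcoef α k‖ * (‖α + (k : ℂ) + 1‖ * ‖α + (k : ℂ) - 1‖)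
          ≤ ‖hcoef α k‖ * (((k : ℝ) + a + 1) ^ 2) := by
            apply mul_le_mul_of_nonneg_left bd1 hc0
        _ ≤ ‖hcoef α k‖ * (((k : ℝ) - 2 * a) * ((k : ℝ) + 1 + m)) := by
            apply mul_le_mul_of_nonneg_left bd2 hc0
        _ ≤ ‖hcoef α k‖ * (((k : ℝ) + 1 + m) * ‖2 * α + (k : ℂ)‖) := by
            apply mul_le_mul_of_nonneg_left ?_ hc0
            calc ((k : ℝ) - 2 * a) * ((k : ℝ) + 1 + m)
                ≤ ‖2 * α + (k : ℂ)‖ * ((k : ℝ) + 1 + m) := by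
                  apply mul_le_mul_of_nonneg_right hlow (by positivity)
              _ = ((k : ℝ) + 1 + m) * ‖2 * α + (k : ℂ)‖ := by ring
    have key2 : (‖hcoef α (k + 1)‖ * ((k : ℝ) + 1)) * ‖2 * α + (k : ℂ)‖ ≤
        (‖hcoef α k‖ * (((k : ℝ) + 1 + m))) * ‖2 * α + (k : ℂ)‖ := by
      calc (‖hcoef α (k + 1)‖ * ((k : ℝ) + 1)) * ‖2 * α + (k : ℂ)‖
          = ‖hcoef α (k + 1)‖ * (((k : ℝ) + 1) * ‖2 * α + (k : ℂ)‖) := by ring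
        _ ≤ ‖hcoef α k‖ * (((k : ℝ) + 1 + m) * ‖2 * α + (k : ℂ)‖) := key
        _ = (‖hcoef α k‖ * (((k : ℝ) + 1 + m))) * ‖2 * α + (k : ℂ)‖ := by ring
    exact le_of_mul_le_mul_right key2 h2n
  -- induction bound for k ≥ K
  set C₀ : ℝ := ‖hcoef α K‖ with hC₀
  have ind : ∀ k : ℕ, K ≤ k → ‖hcoef α k‖ ≤ C₀ * ((k : ℝ) + 1) ^ m := by
    intro k hk
    induction k, hk using Nat.le_induction with
    | base =>
        have h1 : (1 : ℝ) ≤ ((K : ℝ) + 1) ^ m := one_le_pow₀ (by linarith [Nat.cast_nonneg (α := ℝ) K])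
        calc ‖hcoef α K‖ = C₀ * 1 := by rw [hC₀, mul_one]
          _ ≤ C₀ * ((K : ℝ) + 1) ^ m := by
            apply mul_le_mul_of_nonneg_left h1 (norm_nonneg _)
    | succ n hn ih =>
        have hn1 : (0 : ℝ) < (n : ℝ) + 1 := by positivity
        have hstep := step n hn
        have h2 : ‖hcoef α (n + 1)‖ * ((n : ℝ) + 1) ≤ C₀ * (((n : ℝ) + 1) ^ m * (((n : ℝ) + 1) + m)) := by
          calc ‖hcoef α (n + 1)‖ * ((n : ℝ) + 1) ≤ ‖hcoef α n‖ * ((n : ℝ) + 1 + m) := hstep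
            _ ≤ C₀ * ((n : ℝ) + 1) ^ m * ((n : ℝ) + 1 + m) := by
                apply mul_le_mul_of_nonneg_right ih (by positivity)
            _ = C₀ * (((n : ℝ) + 1) ^ m * (((n : ℝ) + 1) + m)) := by ring
        have h3 : ((n : ℝ) + 1) ^ m * (((n : ℝ) + 1) + m) ≤ (((n : ℝ) + 1) + 1) ^ m * ((n : ℝ) + 1) :=
          bern_aux m (by linarith [Nat.cast_nonneg (α := ℝ) n])
        have h4 : ‖hcoef α (n + 1)‖ * ((n : ℝ) + 1) ≤
            C₀ * (((n : ℝ) + 1 + 1) ^ m) * ((n : ℝ) + 1) := by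
          calc ‖hcoef α (n + 1)‖ * ((n : ℝ) + 1) ≤ C₀ * (((n : ℝ) + 1) ^ m * (((n : ℝ) + 1) + m)) := h2
            _ ≤ C₀ * ((((n : ℝ) + 1) + 1) ^ m * ((n : ℝ) + 1)) := by
                apply mul_le_mul_of_nonneg_left h3 (norm_nonneg _)
            _ = C₀ * (((n : ℝ) + 1 + 1) ^ m) * ((n : ℝ) + 1) := by ring
        have := le_of_mul_le_mul_right h4 hn1
        calc ‖hcoef α (n + 1)‖ ≤ C₀ * (((n : ℝ) + 1 + 1) ^ m) := this
          _ = C₀ * ((((n + 1) : ℕ) : ℝ) + 1) ^ m := by push_cast; ring_nf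
  -- combine with finitely many initial terms
  have hCsum : 0 ≤ ∑ j ∈ Finset.range K, ‖hcoef α j‖ :=
    Finset.sum_nonneg fun j _ => norm_nonneg _
  have hC0' : 0 ≤ C₀ := norm_nonneg _
  refine ⟨C₀ + ∑ j ∈ Finset.range K, ‖hcoef α j‖, by linarith, m, fun k => ?_⟩
  have hCnn : (0:ℝ) ≤ C₀ + ∑ j ∈ Finset.range K, ‖hcoef α j‖ := by linarith
  have hpow1 : (1 : ℝ) ≤ ((k : ℝ) + 1) ^ m := one_le_pow₀ (by linarith [Nat.cast_nonneg (α := ℝ) k])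
  have hpow0 : (0 : ℝ) ≤ ((k : ℝ) + 1) ^ m := by positivity
  by_cases hk : K ≤ k
  · calc ‖hcoef α k‖ ≤ C₀ * ((k : ℝ) + 1) ^ m := ind k hk
      _ ≤ (C₀ + ∑ j ∈ Finset.range K, ‖hcoef α j‖) * ((k : ℝ) + 1) ^ m := by
        apply mul_le_mul_of_nonneg_right (by linarith) hpow0
  · push_neg at hk
    have h1 : ‖hcoef α k‖ ≤ ∑ j ∈ Finset.range K, ‖hcoef α j‖ :=
      Finset.single_le_sum (fun j _ => norm_nonneg _) (Finset.mem_range.2 hk)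
    calc ‖hcoef α k‖ ≤ ∑ j ∈ Finset.range K, ‖hcoef α j‖ := h1
      _ = (∑ j ∈ Finset.range K, ‖hcoef α j‖) * 1 := (mul_one _).symm
      _ ≤ (C₀ + ∑ j ∈ Finset.range K, ‖hcoef α j‖) * ((k : ℝ) + 1) ^ m := by
        apply mul_le_mul (by linarith) hpow1 zero_le_one hCnn

lemma aux_summable_pow_geom (q : ℕ) {ρ : ℝ} (h0 : 0 < ρ) (h1 : ρ < 1) :
    Summable (fun k : ℕ => ((k : ℝ) + 1) ^ q * ρ ^ k) := by
  have hρ : ‖ρ‖ < 1 := by rw [Real.norm_eq_abs, abs_of_pos h0]; exact h1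
  have base : Summable (fun k : ℕ => (k : ℝ) ^ q * ρ ^ k) :=
    summable_pow_mul_geometric_of_norm_lt_one q hρ
  have s2 : Summable (fun k : ℕ => ((k + 1 : ℕ) : ℝ) ^ q * ρ ^ (k + 1)) :=
    base.comp_injective (add_left_injective 1)
  have s3 := s2.mul_left ρ⁻¹
  apply s3.congr
  intro k
  have : ρ ^ (k + 1) = ρ * ρ ^ k := by ring
  push_cast
  rw [this]
  field_simp

lemma hcoef_summable (α : ℂ) (hα : ∀ m : ℕ, 2 * α ≠ -(m : ℂ)) (p : ℕ) {ρ : ℝ}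
    (h0 : 0 < ρ) (h1 : ρ < 1) :
    Summable (fun k : ℕ => ‖hcoef α k‖ * ((k : ℝ) + 1) ^ p * ρ ^ k) := by
  obtain ⟨C, hC0, m, hC⟩ := hcoef_growth α hα
  have hs := (aux_summable_pow_geom (m + p) h0 h1).mul_left C
  apply Summable.of_nonneg_of_le (fun k => by positivity) ?_ hs
  intro k
  have h2 : ‖hcoef α k‖ * ((k : ℝ) + 1) ^ p ≤ C * ((k : ℝ) + 1) ^ (m + p) := by
    rw [pow_add]
    calc ‖hcoef α k‖ * ((k : ℝ) + 1) ^ p ≤ (C * ((k : ℝ) + 1) ^ m) * ((k : ℝ) + 1) ^ p :=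
        mul_le_mul_of_nonneg_right (hC k) (by positivity)
      _ = C * (((k : ℝ) + 1) ^ m * ((k : ℝ) + 1) ^ p) := by ring
  calc ‖hcoef α k‖ * ((k : ℝ) + 1) ^ p * ρ ^ k
      ≤ (C * ((k : ℝ) + 1) ^ (m + p)) * ρ ^ k := mul_le_mul_of_nonneg_right h2 (by positivity)
    _ = C * (((k : ℝ) + 1) ^ (m + p) * ρ ^ k) := by ring

lemma hasDerivAt_cpow_one_sub (β : ℂ) {y : ℝ} (hy : y < 1) :
    HasDerivAt (fun t : ℝ => ((1 - t : ℝ) : ℂ) ^ β)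
      (-β * ((1 - y : ℝ) : ℂ) ^ (β - 1)) y := by
  have hsp : (1 : ℂ) - (y : ℂ) ∈ Complex.slitPlane := by
    rw [Complex.mem_slitPlane_iff]
    left
    simp only [Complex.sub_re, Complex.one_re, Complex.ofReal_re]
    linarith
  have hin : HasDerivAt (fun z : ℂ => 1 - z) (-1 : ℂ) (y : ℂ) := by
    simpa using (hasDerivAt_id (y : ℂ)).const_sub 1
  have hc : HasDerivAt (fun z : ℂ => (1 - z) ^ β)
      (β * (1 - (y : ℂ)) ^ (β - 1) * (-1)) (y : ℂ) := hin.cpow_const hsp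
  have hr := hc.comp_ofReal
  have heq : (fun t : ℝ => ((1 - t : ℝ) : ℂ) ^ β) = fun t : ℝ => (1 - (t : ℂ)) ^ β := by
    funext t; push_cast; ring_nf
  rw [heq]
  convert hr using 1
  push_cast
  ring

lemma norm_cpow_bound {a b t : ℝ} (hb : b ≤ 0) (ht : t ∈ Set.Ioo a b)
    (β : ℂ) {P : ℝ} (hP : |β.re| ≤ P) (k : ℕ) :
    ‖((1 - t : ℝ) : ℂ) ^ (β - k)‖ ≤ (1 - a) ^ P * ((1 - b)⁻¹) ^ k := by
  obtain ⟨hta, htb⟩ := ht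
  have hw1 : (1 : ℝ) < 1 - t := by linarith
  have hw0 : (0 : ℝ) < 1 - t := by linarith
  have hwa : 1 - t < 1 - a := by linarith
  have hwb : 1 - b < 1 - t := by linarith
  have hb0 : (0 : ℝ) < 1 - b := by linarith
  have hre : (β - (k : ℂ)).re = β.re - k := by simp
  rw [Complex.norm_cpow_eq_rpow_re_of_pos hw0, hre]
  rw [show β.re - (k : ℝ) = β.re + (-(k : ℝ)) by ring, Real.rpow_add hw0]
  have h1 : (1 - t) ^ β.re ≤ (1 - a) ^ P := by
    rcases le_or_gt 0 β.re with h | h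
    · calc (1 - t) ^ β.re ≤ (1 - a) ^ β.re :=
            Real.rpow_le_rpow hw0.le hwa.le h
        _ ≤ (1 - a) ^ P := by
            apply Real.rpow_le_rpow_of_exponent_le (by linarith)
            calc β.re ≤ |β.re| := le_abs_self _
              _ ≤ P := hP
    · calc (1 - t) ^ β.re ≤ 1 := by
            apply Real.rpow_le_one_of_one_le_of_nonpos hw1.le h.le
        _ ≤ (1 - a) ^ P := by
            apply Real.one_le_rpow (by linarith)
            have : -β.re ≤ |β.re| := neg_le_abs _
            linarith [abs_nonneg β.re, hP]
  have h2 : (1 - t) ^ (-(k : ℝ)) ≤ ((1 - b)⁻¹) ^ k := by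
    rw [Real.rpow_neg hw0.le, Real.rpow_natCast]
    rw [← inv_pow]
    apply pow_le_pow_left₀ (by positivity)
    rw [inv_le_inv₀ hw0 hb0]
    exact hwb.le
  have hnn1 : (0 : ℝ) ≤ (1 - t) ^ β.re := Real.rpow_nonneg hw0.le _
  have hnn2 : (0 : ℝ) ≤ ((1 - b)⁻¹) ^ k := by positivity
  calc (1 - t) ^ β.re * (1 - t) ^ (-(k : ℝ))
      ≤ (1 - a) ^ P * ((1 - b)⁻¹) ^ k := by
        apply mul_le_mul h1 h2 (Real.rpow_nonneg hw0.le _) ?_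
        calc (0:ℝ) ≤ (1 - t) ^ β.re := hnn1
          _ ≤ (1 - a) ^ P := h1

lemma re_abs_aux1 (α : ℂ) : |(-α - 1).re| ≤ ‖α‖ + 2 := by
  have h1 : (-α - (1 : ℂ)).re = -α.re - 1 := by simp
  rw [h1]
  have hre : |α.re| ≤ ‖α‖ := by
    simpa using Complex.abs_re_le_norm α
  rw [abs_le]
  constructor <;> nlinarith [neg_abs_le α.re, le_abs_self α.re]

lemma re_abs_aux2 (α : ℂ) : |(-α - 2).re| ≤ ‖α‖ + 2 := by
  have h1 : (-α - (2 : ℂ)).re = -α.re - 2 := by simp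
  rw [h1]
  have hre : |α.re| ≤ ‖α‖ := by
    simpa using Complex.abs_re_le_norm α
  rw [abs_le]
  constructor <;> nlinarith [neg_abs_le α.re, le_abs_self α.re]

lemma re_abs_aux0 (α : ℂ) : |(-α).re| ≤ ‖α‖ + 2 := by
  have hre : |α.re| ≤ ‖α‖ := by
    simpa using Complex.abs_re_le_norm α
  simp only [Complex.neg_re, abs_neg]
  linarith

set_option maxHeartbeats 1000000 in
/-- for α ∈ ℂ with 2α not a nonpositive integer and every real t < 0,
u(t) := (1−t)^{−α}·F(α+1,α−1;2α;1/(1−t)) satisfies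
t(1−t)u'' + (1−2t)u' + α(α−1)u = u/(1−t). -/
theorem stmt_13 (α : ℂ) (hα : ∀ m : ℕ, 2 * α ≠ -(m : ℂ)) (u : ℝ → ℂ)
    (hu : ∀ t : ℝ, u t =
      ((1 - t : ℝ) : ℂ) ^ (-α) * hypF (α + 1) (α - 1) (2 * α) (1 / (1 - t))) :
    ∀ t : ℝ, t < 0 →
      (t : ℂ) * (1 - (t : ℂ)) * deriv (deriv u) t + (1 - 2 * (t : ℂ)) * deriv u t
        + α * (α - 1) * u t = u t / (1 - (t : ℂ)) := by
  intro t₀ ht₀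
  set a : ℝ := t₀ - 1 with hadef
  set b : ℝ := t₀ / 2 with hbdef
  have hab : a < t₀ := by rw [hadef]; linarith
  have htb : t₀ < b := by rw [hbdef]; linarith
  have hb0 : b ≤ 0 := by rw [hbdef]; linarith
  have hts : t₀ ∈ Set.Ioo a b := ⟨hab, htb⟩
  have hs_open : IsOpen (Set.Ioo a b) := isOpen_Ioo
  have hs_conn : IsPreconnected (Set.Ioo a b) := isPreconnected_Ioo
  set ρ : ℝ := (1 - b)⁻¹ with hρdef
  have h1b : (1 : ℝ) < 1 - b := by linarith
  have hρ0 : 0 < ρ := by rw [hρdef]; positivity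
  have hρ1 : ρ < 1 := by rw [hρdef]; rw [inv_lt_one_iff₀]; right; exact h1b
  set P : ℝ := ‖α‖ + 2 with hPdef
  set M : ℝ := (1 - a) ^ P with hMdef
  have h1a : (1 : ℝ) < 1 - a := by linarith
  have hM0 : 0 < M := by rw [hMdef]; exact Real.rpow_pos_of_pos (by linarith) P
  -- the three term families
  set g0 : ℕ → ℝ → ℂ := fun k t => hcoef α k * ((1 - t : ℝ) : ℂ) ^ (-α - (k : ℂ))
    with hg0def
  set g1 : ℕ → ℝ → ℂ :=
    fun k t => hcoef α k * ((α + k) * ((1 - t : ℝ) : ℂ) ^ (-α - 1 - (k : ℂ)))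
    with hg1def
  set g2 : ℕ → ℝ → ℂ :=
    fun k t => hcoef α k * ((α + k) * (α + k + 1) * ((1 - t : ℝ) : ℂ) ^ (-α - 2 - (k : ℂ)))
    with hg2def
  -- uniform bounds on s
  have hnormk : ∀ k : ℕ, ‖α + (k : ℂ)‖ ≤ (‖α‖ + 2) * ((k : ℝ) + 1) := by
    intro k
    have h := norm_add_le α ((k : ℂ))
    rw [Complex.norm_natCast] at h
    nlinarith [norm_nonneg α, Nat.cast_nonneg (α := ℝ) k]
  have hnormk1 : ∀ k : ℕ, ‖α + (k : ℂ) + 1‖ ≤ (‖α‖ + 2) * ((k : ℝ) + 1) := by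
    intro k
    have h := norm_add_le (α + (k : ℂ)) 1
    rw [norm_one] at h
    have h2 := norm_add_le α ((k : ℂ))
    rw [Complex.norm_natCast] at h2
    nlinarith [norm_nonneg α, Nat.cast_nonneg (α := ℝ) k]
  have hnormk2 : ∀ k : ℕ, ‖α + (k : ℂ) - 1‖ ≤ (‖α‖ + 2) * ((k : ℝ) + 1) := by
    intro k
    have h := norm_sub_le (α + (k : ℂ)) 1
    rw [norm_one] at h
    have h2 := norm_add_le α ((k : ℂ))
    rw [Complex.norm_natCast] at h2
    nlinarith [norm_nonneg α, Nat.cast_nonneg (α := ℝ) k]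
  have hbound0 : ∀ k : ℕ, ∀ y ∈ Set.Ioo a b,
      ‖g0 k y‖ ≤ M * (‖hcoef α k‖ * ((k : ℝ) + 1) ^ 0 * ρ ^ k) := by
    intro k y hy
    simp only [hg0def, norm_mul]
    have hcb := norm_cpow_bound hb0 hy (-α) (re_abs_aux0 α) k
    calc ‖hcoef α k‖ * ‖((1 - y : ℝ) : ℂ) ^ (-α - (k : ℂ))‖
        ≤ ‖hcoef α k‖ * (M * ρ ^ k) :=
          mul_le_mul_of_nonneg_left hcb (norm_nonneg _)
      _ = M * (‖hcoef α k‖ * ((k : ℝ) + 1) ^ 0 * ρ ^ k) := by ring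
  have hbound1 : ∀ k : ℕ, ∀ y ∈ Set.Ioo a b,
      ‖g1 k y‖ ≤ ((‖α‖ + 2) * M) * (‖hcoef α k‖ * ((k : ℝ) + 1) ^ 1 * ρ ^ k) := by
    intro k y hy
    simp only [hg1def, norm_mul]
    have hcb := norm_cpow_bound hb0 hy (-α - 1) (re_abs_aux1 α) k
    have h2 := hnormk k
    have hnn : (0:ℝ) ≤ ‖((1 - y : ℝ) : ℂ) ^ (-α - 1 - (k : ℂ))‖ := norm_nonneg _
    have key : ‖α + (k:ℂ)‖ * ‖((1 - y : ℝ) : ℂ) ^ (-α - 1 - (k : ℂ))‖ ≤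
        ((‖α‖ + 2) * ((k : ℝ) + 1)) * (M * ρ ^ k) := by
      apply mul_le_mul h2 hcb hnn (by positivity)
    calc ‖hcoef α k‖ * (‖α + (k:ℂ)‖ * ‖((1 - y : ℝ) : ℂ) ^ (-α - 1 - (k : ℂ))‖)
        ≤ ‖hcoef α k‖ * (((‖α‖ + 2) * ((k : ℝ) + 1)) * (M * ρ ^ k)) :=
          mul_le_mul_of_nonneg_left key (norm_nonneg _)
      _ = ((‖α‖ + 2) * M) * (‖hcoef α k‖ * ((k : ℝ) + 1) ^ 1 * ρ ^ k) := by ring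
  have hbound2 : ∀ k : ℕ, ∀ y ∈ Set.Ioo a b,
      ‖g2 k y‖ ≤ ((‖α‖ + 2) ^ 2 * M) * (‖hcoef α k‖ * ((k : ℝ) + 1) ^ 2 * ρ ^ k) := by
    intro k y hy
    simp only [hg2def, norm_mul]
    have hcb := norm_cpow_bound hb0 hy (-α - 2) (re_abs_aux2 α) k
    have h2 := hnormk k
    have h3 := hnormk1 k
    have hnn : (0:ℝ) ≤ ‖((1 - y : ℝ) : ℂ) ^ (-α - 2 - (k : ℂ))‖ := norm_nonneg _
    have key : ‖α + (k:ℂ)‖ * ‖α + (k:ℂ) + 1‖ * ‖((1 - y : ℝ) : ℂ) ^ (-α - 2 - (k : ℂ))‖ ≤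
        (((‖α‖ + 2) * ((k : ℝ) + 1)) * ((‖α‖ + 2) * ((k : ℝ) + 1))) * (M * ρ ^ k) := by
      apply mul_le_mul ?_ hcb hnn (by positivity)
      apply mul_le_mul h2 h3 (norm_nonneg _) (by positivity)
    calc ‖hcoef α k‖ * (‖α + (k:ℂ)‖ * ‖α + (k:ℂ) + 1‖ * ‖((1 - y : ℝ) : ℂ) ^ (-α - 2 - (k : ℂ))‖)
        ≤ ‖hcoef α k‖ * ((((‖α‖ + 2) * ((k : ℝ) + 1)) * ((‖α‖ + 2) * ((k : ℝ) + 1))) * (M * ρ ^ k)) :=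
          mul_le_mul_of_nonneg_left key (norm_nonneg _)
      _ = ((‖α‖ + 2) ^ 2 * M) * (‖hcoef α k‖ * ((k : ℝ) + 1) ^ 2 * ρ ^ k) := by ring
  -- summability of the bounds
  have hsum0 := (hcoef_summable α hα 0 hρ0 hρ1).mul_left M
  have hsum1 := (hcoef_summable α hα 1 hρ0 hρ1).mul_left ((‖α‖ + 2) * M)
  have hsum2 := (hcoef_summable α hα 2 hρ0 hρ1).mul_left ((‖α‖ + 2) ^ 2 * M)
  -- summability of the term families on s
  have hsg0 : ∀ y ∈ Set.Ioo a b, Summable (fun k => g0 k y) := fun y hy =>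
    Summable.of_norm_bounded hsum0 (fun k => hbound0 k y hy)
  have hsg1 : ∀ y ∈ Set.Ioo a b, Summable (fun k => g1 k y) := fun y hy =>
    Summable.of_norm_bounded hsum1 (fun k => hbound1 k y hy)
  have hsg2 : ∀ y ∈ Set.Ioo a b, Summable (fun k => g2 k y) := fun y hy =>
    Summable.of_norm_bounded hsum2 (fun k => hbound2 k y hy)
  -- derivatives of the terms
  have hd0 : ∀ k : ℕ, ∀ y ∈ Set.Ioo a b, HasDerivAt (g0 k) (g1 k y) y := by
    intro k y hy
    have hy1 : y < 1 := by have := hy.2; linarith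
    have h := (hasDerivAt_cpow_one_sub (-α - k) hy1).const_mul (hcoef α k)
    simp only [hg1def, hg0def]
    convert h using 1
    · rfl
    rw [show -α - 1 - (k:ℂ) = -α - (k:ℂ) - 1 by ring]
    ring
  have hd1 : ∀ k : ℕ, ∀ y ∈ Set.Ioo a b, HasDerivAt (g1 k) (g2 k y) y := by
    intro k y hy
    have hy1 : y < 1 := by have := hy.2; linarith
    have h := (hasDerivAt_cpow_one_sub (-α - 1 - k) hy1).const_mul (hcoef α k * (α + k))
    have hfun : g1 k = fun t : ℝ =>
        (hcoef α k * (α + k)) * ((1 - t : ℝ) : ℂ) ^ (-α - 1 - (k : ℂ)) := by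
      funext t; simp only [hg1def]; ring
    rw [hfun]; simp only [hg2def]
    convert h using 1
    · rfl
    rw [show -α - 2 - (k:ℂ) = -α - 1 - (k:ℂ) - 1 by ring]
    ring
  -- termwise differentiation
  have key1 : ∀ y ∈ Set.Ioo a b,
      HasDerivAt (fun z => ∑' k, g0 k z) (∑' k, g1 k y) y := fun y hy =>
    hasDerivAt_tsum_of_isPreconnected hsum1 hs_open hs_conn hd0 hbound1 hts
      (hsg0 t₀ hts) hy
  have key2 : ∀ y ∈ Set.Ioo a b,
      HasDerivAt (fun z => ∑' k, g1 k z) (∑' k, g2 k y) y := fun y hy =>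
    hasDerivAt_tsum_of_isPreconnected hsum2 hs_open hs_conn hd1 hbound2 hts
      (hsg1 t₀ hts) hy
  -- representation of u as the series
  have hrep : ∀ y ∈ Set.Ioo a b, u y = ∑' k, g0 k y := by
    intro y hy
    have hy0 : (0 : ℝ) < 1 - y := by have := hy.2; linarith
    have hx0 : ((1 - y : ℝ) : ℂ) ≠ 0 := by
      rw [ne_eq, Complex.ofReal_eq_zero]
      exact ne_of_gt hy0
    rw [hu y]
    unfold hypF
    rw [← tsum_mul_left]
    apply tsum_congr
    intro k
    have hcast : ((1 / (1 - y) : ℝ) : ℂ) = (((1 - y : ℝ) : ℂ))⁻¹ := by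
      push_cast; ring
    have hxk : ((1 / (1 - y) : ℝ) : ℂ) ^ k = ((1 - y : ℝ) : ℂ) ^ (-(k : ℂ)) := by
      rw [hcast, Complex.cpow_neg, Complex.cpow_natCast, inv_pow]
    rw [hxk]; simp only [hg0def]
    show ((1 - y : ℝ) : ℂ) ^ (-α) * (hcoef α k * ((1 - y : ℝ) : ℂ) ^ (-(k : ℂ)))
        = hcoef α k * ((1 - y : ℝ) : ℂ) ^ (-α - (k : ℂ))
    rw [show (-α - (k : ℂ)) = -α + -(k : ℂ) by ring, Complex.cpow_add _ _ hx0]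
    ring
  -- derivative identities
  have hderiv1 : ∀ y ∈ Set.Ioo a b, deriv u y = ∑' k, g1 k y := by
    intro y hy
    have hev : u =ᶠ[nhds y] fun z => ∑' k, g0 k z :=
      Filter.eventuallyEq_of_mem (hs_open.mem_nhds hy) (fun z hz => hrep z hz)
    rw [hev.deriv_eq]
    exact (key1 y hy).deriv
  have hderiv2 : deriv (deriv u) t₀ = ∑' k, g2 k t₀ := by
    have hev : deriv u =ᶠ[nhds t₀] fun z => ∑' k, g1 k z :=
      Filter.eventuallyEq_of_mem (hs_open.mem_nhds hts) (fun z hz => hderiv1 z hz)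
    rw [hev.deriv_eq]
    exact (key2 t₀ hts).deriv
  -- set up final algebra
  set x : ℂ := ((1 - t₀ : ℝ) : ℂ) with hxdef
  have hx0 : x ≠ 0 := by
    rw [hxdef, ne_eq, Complex.ofReal_eq_zero]
    exact ne_of_gt (show (0:ℝ) < 1 - t₀ by linarith)
  have h1x : 1 - (t₀ : ℂ) = x := by rw [hxdef]; push_cast; ring
  have htc : (t₀ : ℂ) = 1 - x := by rw [hxdef]; push_cast; ring
  have estep : ∀ β : ℂ, x ^ (β - 1) * x = x ^ β := by
    intro β
    calc x ^ (β - 1) * x = x ^ (β - 1) * x ^ (1 : ℂ) := by rw [Complex.cpow_one]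
      _ = x ^ (β - 1 + 1) := (Complex.cpow_add _ _ hx0).symm
      _ = x ^ β := by ring_nf
  set G : ℕ → ℂ := fun k =>
    hcoef α k * (((α + k + 1) * (α + k - 1)) * x ^ (-α - 1 - (k : ℂ))) with hGdef
  set H : ℕ → ℂ := fun k =>
    hcoef α k * (((k : ℂ) * (2 * α + k - 1)) * x ^ (-α - (k : ℂ))) with hHdef
  -- termwise identity
  have hterm : ∀ k : ℕ,
      (t₀ : ℂ) * (1 - (t₀ : ℂ)) * g2 k t₀ + (1 - 2 * (t₀ : ℂ)) * g1 k t₀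
        + α * (α - 1) * g0 k t₀ - g0 k t₀ / (1 - (t₀ : ℂ)) = G k - H k := by
    intro k
    simp only [hg0def, hg1def, hg2def, hGdef, hHdef]
    rw [h1x, htc, ← hxdef]
    have f1 : x ^ (-α - 1 - (k : ℂ)) = x ^ (-α - 2 - (k : ℂ)) * x := by
      rw [show -α - 2 - (k:ℂ) = (-α - 1 - (k:ℂ)) - 1 by ring]
      exact (estep _).symm
    have f0 : x ^ (-α - (k : ℂ)) = x ^ (-α - 2 - (k : ℂ)) * x * x := by
      rw [show -α - (k:ℂ) = (-α - 1 - (k:ℂ)) + 1 by ring]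
      rw [Complex.cpow_add _ _ hx0, Complex.cpow_one, f1]
    rw [f0, f1]
    field_simp
    ring
  -- summability of G and H
  have hsumG : Summable G := by
    apply Summable.of_norm_bounded hsum2
    intro k
    simp only [hGdef, norm_mul]
    have hcb := norm_cpow_bound hb0 hts (-α - 1) (re_abs_aux1 α) k
    rw [← hxdef] at hcb
    have h2 := hnormk1 k
    have h3 := hnormk2 k
    have key : ‖α + (k:ℂ) + 1‖ * ‖α + (k:ℂ) - 1‖ * ‖x ^ (-α - 1 - (k : ℂ))‖ ≤
        (((‖α‖ + 2) * ((k : ℝ) + 1)) * ((‖α‖ + 2) * ((k : ℝ) + 1))) * (M * ρ ^ k) := by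
      apply mul_le_mul ?_ hcb (norm_nonneg _) (by positivity)
      apply mul_le_mul h2 h3 (norm_nonneg _) (by positivity)
    calc ‖hcoef α k‖ * (‖α + (k:ℂ) + 1‖ * ‖α + (k:ℂ) - 1‖ * ‖x ^ (-α - 1 - (k : ℂ))‖)
        ≤ ‖hcoef α k‖ * ((((‖α‖ + 2) * ((k : ℝ) + 1)) * ((‖α‖ + 2) * ((k : ℝ) + 1))) * (M * ρ ^ k)) :=
          mul_le_mul_of_nonneg_left key (norm_nonneg _)
      _ = ((‖α‖ + 2) ^ 2 * M) * (‖hcoef α k‖ * ((k : ℝ) + 1) ^ 2 * ρ ^ k) := by ring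
  have hsumH : Summable H := by
    have hsum2' := (hcoef_summable α hα 2 hρ0 hρ1).mul_left ((2 * ‖α‖ + 2) * M)
    apply Summable.of_norm_bounded hsum2'
    intro k
    simp only [hHdef, norm_mul]
    have hcb := norm_cpow_bound hb0 hts (-α) (re_abs_aux0 α) k
    rw [← hxdef] at hcb
    have h2 : ‖(k : ℂ)‖ ≤ (k : ℝ) + 1 := by
      rw [Complex.norm_natCast]; linarith
    have h3 : ‖2 * α + (k:ℂ) - 1‖ ≤ (2 * ‖α‖ + 2) * ((k : ℝ) + 1) := by
      have ha := norm_sub_le (2 * α + (k : ℂ)) 1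
      have hb := norm_add_le (2 * α) ((k : ℂ))
      rw [norm_one] at ha
      rw [Complex.norm_natCast] at hb
      have hc : ‖(2 : ℂ) * α‖ = 2 * ‖α‖ := by
        rw [norm_mul]; norm_num
      rw [hc] at hb
      nlinarith [norm_nonneg α, Nat.cast_nonneg (α := ℝ) k]
    have key : ‖(k : ℂ)‖ * ‖2 * α + (k:ℂ) - 1‖ * ‖x ^ (-α - (k : ℂ))‖ ≤
        (((k : ℝ) + 1) * ((2 * ‖α‖ + 2) * ((k : ℝ) + 1))) * (M * ρ ^ k) := by
      apply mul_le_mul ?_ hcb (norm_nonneg _) (by positivity)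
      apply mul_le_mul h2 h3 (norm_nonneg _) (by positivity)
    calc ‖hcoef α k‖ * (‖(k : ℂ)‖ * ‖2 * α + (k:ℂ) - 1‖ * ‖x ^ (-α - (k : ℂ))‖)
        ≤ ‖hcoef α k‖ * ((((k : ℝ) + 1) * ((2 * ‖α‖ + 2) * ((k : ℝ) + 1))) * (M * ρ ^ k)) :=
          mul_le_mul_of_nonneg_left key (norm_nonneg _)
      _ = ((2 * ‖α‖ + 2) * M) * (‖hcoef α k‖ * ((k : ℝ) + 1) ^ 2 * ρ ^ k) := by ring
  -- telescoping: ∑ (G - H) = 0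
  have hzero : ∑' k, (G k - H k) = 0 := by
    rw [Summable.tsum_sub hsumG hsumH]
    have hH0 : H 0 = 0 := by simp only [hHdef]; simp
    have hshift : ∑' k, H k = ∑' k, G k := by
      rw [Summable.tsum_eq_zero_add hsumH, hH0, zero_add]
      apply tsum_congr
      intro k
      simp only [hHdef, hGdef]
      have hrec := hcoef_rec α hα k
      push_cast
      rw [show -α - ((k:ℂ) + 1) = -α - 1 - (k:ℂ) by ring]
      linear_combination x ^ (-α - 1 - (k:ℂ)) * hrec
    rw [hshift, sub_self]
  -- assembling
  have sg0 := hsg0 t₀ hts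
  have sg1 := hsg1 t₀ hts
  have sg2 := hsg2 t₀ hts
  have s2' : Summable fun k => (t₀ : ℂ) * (1 - (t₀ : ℂ)) * g2 k t₀ := sg2.mul_left _
  have s1' : Summable fun k => (1 - 2 * (t₀ : ℂ)) * g1 k t₀ := sg1.mul_left _
  have s0' : Summable fun k => α * (α - 1) * g0 k t₀ := sg0.mul_left _
  have sD : Summable fun k => g0 k t₀ / (1 - (t₀ : ℂ)) := sg0.div_const _
  have hsplit : ∑' k, ((t₀ : ℂ) * (1 - (t₀ : ℂ)) * g2 k t₀ + (1 - 2 * (t₀ : ℂ)) * g1 k t₀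
        + α * (α - 1) * g0 k t₀ - g0 k t₀ / (1 - (t₀ : ℂ)))
      = (t₀ : ℂ) * (1 - (t₀ : ℂ)) * (∑' k, g2 k t₀) + (1 - 2 * (t₀ : ℂ)) * (∑' k, g1 k t₀)
        + α * (α - 1) * (∑' k, g0 k t₀) - (∑' k, g0 k t₀) / (1 - (t₀ : ℂ)) := by
    rw [Summable.tsum_sub ((s2'.add s1').add s0') sD, Summable.tsum_add (s2'.add s1') s0', Summable.tsum_add s2' s1',
      tsum_mul_left, tsum_mul_left, tsum_mul_left, tsum_div_const]
  have hmain : ∑' k, ((t₀ : ℂ) * (1 - (t₀ : ℂ)) * g2 k t₀ + (1 - 2 * (t₀ : ℂ)) * g1 k t₀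
        + α * (α - 1) * g0 k t₀ - g0 k t₀ / (1 - (t₀ : ℂ))) = 0 := by
    rw [tsum_congr hterm]
    exact hzero
  rw [hderiv2, hderiv1 t₀ hts, hrep t₀ hts]
  have := hsplit ▸ hmain
  linear_combination this
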